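/- (Discrete Picone inequality) Let p ∈ (1,∞) and let u, v : ℝ^N → ℝ with u ≥ 0 and v > 0. Then for all x, y, K(u,v)(x,y) := |u(x)-u(y)|^p - |v(x)-v(y)|^{p-2}(v(x)-v(y)) ( u(x)^p / v(x)^{p-1} - u(y)^p / v(y)^{p-1} ) ≥ 0. -/

import Mathlib

open Real

/-- Two-term convexity for rpow: `(X+Y)^p ≤ l^(1-p) X^p + m^(1-p) Y^p` for weights `l+m=1`. -/
lemma picone_convexity {p X Y l m : ℝ} (hp : 1 ≤ p) (hX : 0 ≤ X) (hY : 0 ≤ Y)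
    (hl : 0 < l) (hm : 0 < m) (hlm : l + m = 1) :
    (X + Y) ^ p ≤ l ^ (1 - p) * X ^ p + m ^ (1 - p) * Y ^ p := by
  have h := (convexOn_rpow hp).2 (x := X / l) (y := Y / m)
    (by simp [Set.mem_Ici]; positivity) (by simp [Set.mem_Ici]; positivity)
    hl.le hm.le hlm
  simp only [smul_eq_mul] at h
  have hx : l * (X / l) + m * (Y / m) = X + Y := by field_simp
  rw [hx] at h
  calc (X + Y) ^ p ≤ l * (X / l) ^ p + m * (Y / m) ^ p := h
    _ = l ^ (1 - p) * X ^ p + m ^ (1 - p) * Y ^ p := by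
        rw [Real.div_rpow hX hl.le, Real.div_rpow hY hm.le,
          Real.rpow_sub hl, Real.rpow_sub hm, Real.rpow_one]
        field_simp
        simp only [Real.rpow_one, pow_one]
        ring

/-- Key real inequality: for `0 ≤ a`, `0 ≤ b`, `0 < t < s`,
`(s-t)^(p-1) (a^p/s^(p-1) - b^p/t^(p-1)) ≤ |a-b|^p`. -/
lemma picone_key {p a b s t : ℝ} (hp : 1 < p) (ha : 0 ≤ a) (hb : 0 ≤ b)
    (ht : 0 < t) (hts : t < s) :
    (s - t) ^ (p - 1) * (a ^ p / s ^ (p - 1) - b ^ p / t ^ (p - 1)) ≤ |a - b| ^ p := by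
  have hs : 0 < s := ht.trans hts
  have hst : 0 < s - t := by linarith
  have hp1 : 0 < p - 1 := by linarith
  have habs : (0:ℝ) ≤ |a - b| ^ p := Real.rpow_nonneg (abs_nonneg _) _
  rcases le_or_gt a b with hab | hab
  · -- then the LHS is nonpositive
    have h1 : a ^ p ≤ b ^ p := Real.rpow_le_rpow ha hab (by linarith)
    have h2 : t ^ (p - 1) ≤ s ^ (p - 1) := Real.rpow_le_rpow ht.le hts.le hp1.le
    have h3 : a ^ p / s ^ (p - 1) ≤ b ^ p / t ^ (p - 1) :=
      div_le_div₀ (Real.rpow_nonneg hb p) h1 (Real.rpow_pos_of_pos ht _) h2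
    exact le_trans (mul_nonpos_of_nonneg_of_nonpos (Real.rpow_nonneg hst.le _)
      (by linarith)) habs
  · -- a > b
    have hX : 0 ≤ a - b := by linarith
    have hconv := picone_convexity (p := p) (X := a - b) (Y := b) hp.le hX hb
      (l := (s - t)/s) (m := t/s) (by positivity) (by positivity) (by field_simp; ring)
    rw [show a - b + b = a by ring] at hconv
    -- multiply by ((s-t)/s)^(p-1)
    have hc : (0:ℝ) < ((s - t)/s) ^ (p - 1) := Real.rpow_pos_of_pos (by positivity) _
    have key : ((s - t)/s) ^ (p - 1) * a ^ p
        ≤ (a - b) ^ p + ((s - t)/t) ^ (p - 1) * b ^ p := by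
      have := mul_le_mul_of_nonneg_left hconv hc.le
      calc ((s - t)/s) ^ (p - 1) * a ^ p
          ≤ ((s - t)/s) ^ (p - 1) * (((s - t)/s) ^ (1 - p) * (a - b) ^ p
              + (t/s) ^ (1 - p) * b ^ p) := this
        _ = (a - b) ^ p + (((s - t)/s) ^ (p - 1) * (t/s) ^ (1 - p)) * b ^ p := by
            rw [mul_add, ← mul_assoc, ← mul_assoc,
              ← Real.rpow_add (by positivity), show p - 1 + (1 - p) = 0 by ring,
              Real.rpow_zero, one_mul]
        _ = (a - b) ^ p + ((s - t)/t) ^ (p - 1) * b ^ p := by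
            have e3 : (t/s) ^ (1 - p) = (s/t) ^ (p - 1) := by
              rw [show (1 : ℝ) - p = -(p - 1) by ring,
                Real.rpow_neg (by positivity), ← Real.inv_rpow (by positivity), inv_div]
            have e4 : (s - t)/s * (s/t) = (s - t)/t := by field_simp
            rw [e3, ← Real.mul_rpow (by positivity) (by positivity), e4]
    have e1 : ((s - t)/s) ^ (p - 1) * a ^ p = (s - t) ^ (p - 1) * (a ^ p / s ^ (p - 1)) := by
      rw [Real.div_rpow hst.le hs.le]; ring
    have e2 : ((s - t)/t) ^ (p - 1) * b ^ p = (s - t) ^ (p - 1) * (b ^ p / t ^ (p - 1)) := by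
      rw [Real.div_rpow hst.le ht.le]; ring
    rw [abs_of_nonneg hX]
    rw [e1, e2] at key
    linarith

theorem discrete_picone (N : ℕ) (p : ℝ) (hp : 1 < p)
    (u v : EuclideanSpace ℝ (Fin N) → ℝ)
    (hu : ∀ z, 0 ≤ u z) (hv : ∀ z, 0 < v z) (x y : EuclideanSpace ℝ (Fin N)) :
    0 ≤ |u x - u y| ^ p -
      |v x - v y| ^ (p - 2) * (v x - v y) *
        (u x ^ p / v x ^ (p - 1) - u y ^ p / v y ^ (p - 1)) := by
  have habs : (0:ℝ) ≤ |u x - u y| ^ p := Real.rpow_nonneg (abs_nonneg _) _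
  rcases lt_trichotomy (v x) (v y) with h | h | h
  · have hpos : 0 < v y - v x := by linarith
    have e : |v x - v y| ^ (p - 2) * (v x - v y) = -((v y - v x) ^ (p - 1)) := by
      rw [abs_sub_comm, abs_of_pos hpos, show v x - v y = -(v y - v x) by ring,
        mul_neg, ← Real.rpow_add_one (ne_of_gt hpos), show p - 2 + 1 = p - 1 by ring]
    rw [e]
    have key := picone_key hp (hu y) (hu x) (hv x) h
    rw [abs_sub_comm] at key
    nlinarith
  · simpa [h] using habs
  · have hpos : 0 < v x - v y := by linarith
    have e : |v x - v y| ^ (p - 2) * (v x - v y) = (v x - v y) ^ (p - 1) := by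
      rw [abs_of_pos hpos, ← Real.rpow_add_one (ne_of_gt hpos),
        show p - 2 + 1 = p - 1 by ring]
    rw [e]
    have key := picone_key hp (hu x) (hu y) (hv y) h
    nlinarith
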